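/- arXiv:1505.01695 — 3 statements merged into one kernel-verified Lean document; each statement's English description precedes it below -/
import Mathlib

section
/- Let R be a binary relation on a type α, partitioned into R = R₁ ∪ R₂. Suppose there is a function w : α → S into a set S with a well-founded order such that for every (a,b) with R₁ a b we have w a > w b, and for every (a,b) with R₂ a b we have w a ≥ w b. Then R is terminating (well-founded as a reduction relation, i.e., admits no infinite R-chains) if and only if R₂ is terminating. -/
theorem stmt_9 {α : Type*} {S : Type*} [PartialOrder S]
    (hwf : WellFounded ((· < ·) : S → S → Prop))
    (R R₁ R₂ : α → α → Prop)
    (hR : ∀ a b, R a b ↔ R₁ a b ∨ R₂ a b)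
    (w : α → S)
    (h1 : ∀ a b, R₁ a b → w b < w a)
    (h2 : ∀ a b, R₂ a b → w b ≤ w a) :
    (¬ ∃ f : ℕ → α, ∀ n, R (f n) (f (n + 1))) ↔
      (¬ ∃ f : ℕ → α, ∀ n, R₂ (f n) (f (n + 1))) := by
  constructor
  · intro h ⟨f, hf⟩
    exact h ⟨f, fun n => (hR _ _).2 (Or.inr (hf n))⟩
  · intro h ⟨f, hf⟩
    have step : ∀ n, w (f (n + 1)) ≤ w (f n) := by
      intro n
      rcases (hR _ _).1 (hf n) with h' | h'
      · exact (h1 _ _ h').le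
      · exact h2 _ _ h'
    have anti : ∀ d n, w (f (n + d)) ≤ w (f n) := by
      intro d
      induction d with
      | zero => intro n; simp
      | succ d ih =>
        intro n
        calc w (f (n + (d + 1))) = w (f ((n + d) + 1)) := by ring_nf
          _ ≤ w (f (n + d)) := step _
          _ ≤ w (f n) := ih n
    obtain ⟨m, ⟨k, hk⟩, hmin⟩ :=
      hwf.has_min (Set.range (fun n => w (f n))) ⟨w (f 0), ⟨0, rfl⟩⟩
    have heq : ∀ n, w (f (n + k)) = m := by
      intro n
      have hle : w (f (n + k)) ≤ m := by
        rw [← hk]; simpa [Nat.add_comm] using anti n k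
      have hnlt := hmin _ ⟨n + k, rfl⟩
      by_contra hne
      exact hnlt (lt_of_le_of_ne hle hne)
    refine h ⟨fun n => f (n + k), fun n => ?_⟩
    have hnk : (n + 1) + k = (n + k) + 1 := by omega
    rcases (hR _ _).1 (hf (n + k)) with h' | h'
    · exfalso
      have := h1 _ _ h'
      rw [← hnk, heq, heq] at this
      exact lt_irrefl m this
    · show R₂ (f (n + k)) (f ((n + 1) + k)); rw [hnk]; exact h'
end

section
/- Let T be a weighted type graph over a commutative semiring S, and let a pushout square G₁ ←ψ₁− G₀ −ψ₂→ G₂, with pushout object G and injections φ₁, φ₂, have discrete G₀ (G₀ has no edges). Then for every typing morphism t : G → T, w_T(t) = w_T(t ∘ φ₁) ⊗ w_T(t ∘ φ₂), where w_T(t) = ∏_{e ∈ E_D} w_T(t(e)) for t with domain D. -/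
structure LabGraph (Λ : Type) where
  V : Type
  E : Type
  src : E → V
  tgt : E → V
  lab : E → Λ

@[ext]
structure GraphHom {Λ : Type} (G H : LabGraph Λ) where
  fV : G.V → H.V
  fE : G.E → H.E
  src_eq : ∀ e, H.src (fE e) = fV (G.src e)
  tgt_eq : ∀ e, H.tgt (fE e) = fV (G.tgt e)
  lab_eq : ∀ e, H.lab (fE e) = G.lab e

def GraphHom.comp {Λ : Type} {G H K : LabGraph Λ} (g : GraphHom H K) (f : GraphHom G H) :
    GraphHom G K where
  fV := g.fV ∘ f.fV
  fE := g.fE ∘ f.fE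
  src_eq e := by simp [g.src_eq, f.src_eq]
  tgt_eq e := by simp [g.tgt_eq, f.tgt_eq]
  lab_eq e := by simp [g.lab_eq, f.lab_eq]

/-- The pushout property via the universal property in the category of graphs. -/
def IsGraphPushout {Λ : Type} {G₀ G₁ G₂ G : LabGraph Λ}
    (ψ₁ : GraphHom G₀ G₁) (ψ₂ : GraphHom G₀ G₂)
    (φ₁ : GraphHom G₁ G) (φ₂ : GraphHom G₂ G) : Prop :=
  φ₁.comp ψ₁ = φ₂.comp ψ₂ ∧
    ∀ (T : LabGraph Λ) (t₁ : GraphHom G₁ T) (t₂ : GraphHom G₂ T),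
      t₁.comp ψ₁ = t₂.comp ψ₂ →
        ∃! t : GraphHom G T, t.comp φ₁ = t₁ ∧ t.comp φ₂ = t₂


/-- The weight of a typing morphism: product of the weights of the images of all edges. -/
def weight {Λ : Type} {S : Type*} [CommSemiring S] {D T : LabGraph Λ} [Fintype D.E]
    (w : T.E → S) (t : GraphHom D T) : S :=
  ∏ e : D.E, w (t.fE e)

theorem stmt_13 {Λ : Type} {S : Type*} [CommSemiring S]
    {G₀ G₁ G₂ G T : LabGraph Λ}
    [Fintype G.E] [Fintype G₁.E] [Fintype G₂.E]
    (hdiscrete : IsEmpty G₀.E)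
    (ψ₁ : GraphHom G₀ G₁) (ψ₂ : GraphHom G₀ G₂)
    (φ₁ : GraphHom G₁ G) (φ₂ : GraphHom G₂ G)
    (hpo : IsGraphPushout ψ₁ ψ₂ φ₁ φ₂)
    (w : T.E → S) (t : GraphHom G T) :
    weight w t = weight w (t.comp φ₁) * weight w (t.comp φ₂) := by
  obtain ⟨hcomm, huniv⟩ := hpo
  -- Auxiliary graph with edge set G₁.E ⊕ G₂.E
  set T' : LabGraph Λ :=
    { V := G.V
      E := G₁.E ⊕ G₂.E
      src := Sum.elim (fun e => φ₁.fV (G₁.src e)) (fun e => φ₂.fV (G₂.src e))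
      tgt := Sum.elim (fun e => φ₁.fV (G₁.tgt e)) (fun e => φ₂.fV (G₂.tgt e))
      lab := Sum.elim G₁.lab G₂.lab } with hT'
  have hV : φ₁.fV ∘ ψ₁.fV = φ₂.fV ∘ ψ₂.fV := congrArg GraphHom.fV hcomm
  let t₁ : GraphHom G₁ T' := ⟨φ₁.fV, Sum.inl, fun e => rfl, fun e => rfl, fun e => rfl⟩
  let t₂ : GraphHom G₂ T' := ⟨φ₂.fV, Sum.inr, fun e => rfl, fun e => rfl, fun e => rfl⟩
  have hc : t₁.comp ψ₁ = t₂.comp ψ₂ := by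
    ext x
    · exact congrFun hV x
    · exact (hdiscrete.false x).elim
  obtain ⟨u, ⟨hu₁, hu₂⟩, huniq⟩ := huniv T' t₁ t₂ hc
  -- the map back
  let k : GraphHom T' G :=
    ⟨id, Sum.elim φ₁.fE φ₂.fE,
      fun e => by cases e <;> simp [φ₁.src_eq, φ₂.src_eq, hT'] <;> rfl,
      fun e => by cases e <;> simp [φ₁.tgt_eq, φ₂.tgt_eq, hT'] <;> rfl,
      fun e => by cases e <;> simp [φ₁.lab_eq, φ₂.lab_eq, hT'] <;> rfl⟩
  have hleft : ∀ x : G₁.E ⊕ G₂.E, u.fE (Sum.elim φ₁.fE φ₂.fE x) = x := by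
    intro x
    cases x with
    | inl e => exact congrFun (congrArg GraphHom.fE hu₁) e
    | inr e => exact congrFun (congrArg GraphHom.fE hu₂) e
  have hright : ∀ e : G.E, Sum.elim φ₁.fE φ₂.fE (u.fE e) = e := by
    obtain ⟨v, ⟨hv₁, hv₂⟩, hvuniq⟩ := huniv G φ₁ φ₂ hcomm
    have h1 : k.comp u = v := by
      apply hvuniq
      constructor
      · rw [show (k.comp u).comp φ₁ = k.comp (u.comp φ₁) from rfl, hu₁]
        ext x
        · rfl
        · rfl
      · rw [show (k.comp u).comp φ₂ = k.comp (u.comp φ₂) from rfl, hu₂]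
        ext x
        · rfl
        · rfl
    have h2 : GraphHom.mk (G := G) id id (fun _ => rfl) (fun _ => rfl) (fun _ => rfl) = v := by
      apply hvuniq
      constructor <;> (ext x <;> rfl)
    have := h1.trans h2.symm
    intro e
    exact congrFun (congrArg GraphHom.fE this) e
  let eqv : (G₁.E ⊕ G₂.E) ≃ G.E :=
    ⟨Sum.elim φ₁.fE φ₂.fE, u.fE, hleft, hright⟩
  have : weight w t = ∏ x : G₁.E ⊕ G₂.E, w (t.fE (eqv x)) :=
    (Fintype.prod_equiv eqv _ _ (fun x => rfl)).symm
  rw [this, Fintype.prod_sum_type]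
  rfl
end

section
/- The string rewriting system with the single rule aa → aba over the alphabet {a,b} is terminating: there is no infinite sequence of strings w₀ → w₁ → ⋯ where each step replaces an occurrence of the factor 'aa' by 'aba'. -/
inductive AB : Type
  | a : AB
  | b : AB

/-- One rewrite step of the string rewriting rule `aa → aba`. -/
def Step (w₁ w₂ : List AB) : Prop :=
  ∃ u v : List AB, w₁ = u ++ [AB.a, AB.a] ++ v ∧ w₂ = u ++ [AB.a, AB.b, AB.a] ++ v

/-- Number of occurrences of the factor `aa`. -/
def cnt : List AB → ℕ
  | AB.a :: AB.a :: t => cnt (AB.a :: t) + 1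
  | _ :: t => cnt t
  | [] => 0

def headA : List AB → ℕ
  | AB.a :: _ => 1
  | _ => 0

lemma cnt_a_cons (l : List AB) : cnt (AB.a :: l) = cnt l + headA l := by
  match l with
  | [] => rfl
  | AB.a :: t => rfl
  | AB.b :: t => rfl

lemma cnt_b_cons (l : List AB) : cnt (AB.b :: l) = cnt l := rfl

lemma headA_append (u v : List AB) :
    headA (u ++ [AB.a, AB.a] ++ v) = headA (u ++ [AB.a, AB.b, AB.a] ++ v) := by
  cases u with
  | nil => rfl
  | cons x u' => cases x <;> rfl

lemma key (u v : List AB) :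
    cnt (u ++ [AB.a, AB.a] ++ v) = cnt (u ++ [AB.a, AB.b, AB.a] ++ v) + 1 := by
  induction u with
  | nil =>
      show cnt (AB.a :: AB.a :: v) = cnt (AB.a :: AB.b :: AB.a :: v) + 1
      simp [cnt_a_cons, cnt_b_cons, headA]
  | cons x u' ih =>
      cases x with
      | a =>
          simp only [List.cons_append]
          rw [cnt_a_cons, cnt_a_cons, ih, headA_append u' v]
          ring
      | b =>
          simp only [List.cons_append]
          rw [cnt_b_cons, cnt_b_cons, ih]

theorem stmt_16 : ¬ ∃ f : ℕ → List AB, ∀ n, Step (f n) (f (n + 1)) := by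
  rintro ⟨f, hf⟩
  have hlt : ∀ n, cnt (f (n + 1)) < cnt (f n) := by
    intro n
    obtain ⟨u, v, h1, h2⟩ := hf n
    rw [h1, h2, key]
    omega
  have hle : ∀ n, cnt (f n) + n ≤ cnt (f 0) := by
    intro n
    induction n with
    | zero => omega
    | succ k ihk => have := hlt k; omega
  have := hle (cnt (f 0) + 1)
  omega
end
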